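/- arXiv:1811.02664 — 3 statements merged into one kernel-verified Lean document; each statement's English description precedes it below -/
import Mathlib

section
/- Let n - 1 > k ≥ 1 and let G be a k-connected graph of order n. Then for every vertex x of G, the status of x satisfies W(x,G) ≤ (1/2)·⌊(n+k-2)/k⌋·(2n+k-2-k·⌊(n+k-2)/k⌋). -/
open Finset SimpleGraph

/-- The status of a vertex: sum of distances to all other vertices. -/
noncomputable def status {V : Type*} [Fintype V] (G : SimpleGraph V) (x : V) : ℕ :=
  ∑ y, G.dist x y

/-- The Wiener index: sum of distances over unordered pairs of vertices. -/
noncomputable def wiener {V : Type*} [Fintype V] [DecidableEq V] (G : SimpleGraph V) : ℚ :=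
  (∑ p ∈ Finset.univ.offDiag, (G.dist p.1 p.2 : ℚ)) / 2

/-- Eccentricity of a vertex. -/
noncomputable def ecc {V : Type*} [Fintype V] (G : SimpleGraph V) (x : V) : ℕ :=
  Finset.univ.sup (fun y => G.dist x y)

/-- Diameter: maximum distance between pairs of vertices. -/
noncomputable def graphDiam {V : Type*} [Fintype V] (G : SimpleGraph V) : ℕ :=
  Finset.univ.sup (fun p : V × V => G.dist p.1 p.2)

/-- The set of vertices at distance exactly `i` from `x`. -/
noncomputable def sphere {V : Type*} [Fintype V] [DecidableEq V] (G : SimpleGraph V) (x : V) (i : ℕ) :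
    Finset V :=
  Finset.univ.filter (fun y => G.dist x y = i)

/-- `G` is `k`-connected: more than `k` vertices and removing any `k-1` vertices
leaves a connected graph. -/
def IsKConnected {V : Type*} [Fintype V] (G : SimpleGraph V) (k : ℕ) : Prop :=
  k < Fintype.card V ∧
    ∀ S : Finset V, S.card ≤ k - 1 → (G.induce ((↑S : Set V)ᶜ)).Connected
/-- Circular distance between two positions on a cycle of length `n`. -/
def circDist (n : ℕ) (i j : Fin n) : ℕ :=
  min ((i.val + n - j.val) % n) ((j.val + n - i.val) % n)

lemma circDist_comm (n : ℕ) (i j : Fin n) : circDist n i j = circDist n j i := by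
  unfold circDist; exact min_comm _ _

/-- The Harary graph `H_{k,n}` for `k` even: each vertex is adjacent to the
nearest `k/2` vertices in each direction around the circle. -/
def hararyEven (k n : ℕ) : SimpleGraph (Fin n) where
  Adj i j := i ≠ j ∧ circDist n i j ≤ k / 2
  symm := ⟨by
    intro i j h
    exact ⟨h.1.symm, by rw [circDist_comm]; exact h.2⟩⟩
  loopless := ⟨fun i h => h.1 rfl⟩

/-- The Harary graph `H_{k,n}` for `k` odd and `n` even: each vertex is adjacent to
the nearest `(k-1)/2` vertices in each direction and to the diametrically opposite
vertex. -/
def hararyOddEven (k n : ℕ) : SimpleGraph (Fin n) where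
  Adj i j := i ≠ j ∧ (circDist n i j ≤ (k - 1) / 2 ∨ circDist n i j = n / 2)
  symm := ⟨by
    intro i j h
    refine ⟨h.1.symm, ?_⟩
    rw [circDist_comm]; exact h.2⟩
  loopless := ⟨fun i h => h.1 rfl⟩

/-- The Harary graph `H_{k,n}` for `k` and `n` both odd: obtained from `H_{k-1,n}` by
adding an edge between vertices `a` and `a + (n-1)/2` for `0 ≤ a ≤ (n-1)/2`. -/
def hararyOddOdd (k n : ℕ) : SimpleGraph (Fin n) where
  Adj i j := i ≠ j ∧ (circDist n i j ≤ (k - 1) / 2 ∨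
    ∃ a : Fin n, a.val ≤ (n - 1) / 2 ∧
      ((i = a ∧ j.val = (a.val + (n - 1) / 2) % n) ∨
       (j = a ∧ i.val = (a.val + (n - 1) / 2) % n)))
  symm := ⟨by
    intro i j h
    refine ⟨h.1.symm, ?_⟩
    rcases h.2 with h2 | ⟨a, ha, hc⟩
    · left; rw [circDist_comm]; exact h2
    · right; exact ⟨a, ha, hc.symm⟩⟩
  loopless := ⟨fun i h => h.1 rfl⟩
-- IVT along a walk
lemma walk_ivt {V : Type*} [Fintype V] {G : SimpleGraph V} (hc : G.Connected) (x : V) (i : ℕ) :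
    ∀ {u v : V} (w : G.Walk u v), G.dist x u ≤ i → i ≤ G.dist x v →
      ∃ z ∈ w.support, G.dist x z = i := by
  intro u v w
  induction w with
  | nil => intro h1 h2; exact ⟨_, by simp, le_antisymm h1 h2⟩
  | cons h p ih =>
    rename_i a b c
    intro h1 h2
    by_cases hai : G.dist x a = i
    · exact ⟨a, by simp, hai⟩
    · have hlt : G.dist x a < i := lt_of_le_of_ne h1 hai
      have hb : G.dist x b ≤ G.dist x a + 1 := by
        have := hc.dist_triangle (u := x) (v := a) (w := b)
        rwa [(SimpleGraph.dist_eq_one_iff_adj).2 h] at this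
      obtain ⟨z, hz, hzi⟩ := ih (by omega) h2
      exact ⟨z, by simp [hz], hzi⟩

lemma kconn_connected {V : Type*} [Fintype V] {G : SimpleGraph V} {k : ℕ}
    (hG : IsKConnected G k) : G.Connected := by
  have h := hG.2 ∅ (by simp)
  have : ((↑(∅ : Finset V) : Set V)ᶜ) = Set.univ := by simp
  rw [this] at h
  exact (G.induceUnivIso.connected_iff).1 h

lemma sphere_card_ge {V : Type*} [Fintype V] [DecidableEq V] {G : SimpleGraph V} {k : ℕ}
    (hG : IsKConnected G k) (x y : V) (i : ℕ) (hi1 : 1 ≤ i) (hiy : i < G.dist x y) :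
    k ≤ (sphere G x i).card := by
  by_contra hcard
  push_neg at hcard
  have h := hG.2 (sphere G x i) (by omega)
  have hx : x ∈ ((↑(sphere G x i) : Set V)ᶜ) := by
    simp [sphere, SimpleGraph.dist_self]; omega
  have hy : y ∈ ((↑(sphere G x i) : Set V)ᶜ) := by
    simp [sphere, SimpleGraph.dist_self]; omega
  obtain ⟨w⟩ := h.preconnected ⟨x, hx⟩ ⟨y, hy⟩
  have hc := kconn_connected hG
  obtain ⟨z, hz, hzi⟩ := walk_ivt hc x i
    (w.map (SimpleGraph.Embedding.induce _).toHom) (by simp [SimpleGraph.dist_self]) (le_of_lt hiy)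
  rw [SimpleGraph.Walk.support_map] at hz
  obtain ⟨⟨z', hz'⟩, _, rfl⟩ := List.mem_map.1 hz
  simp [sphere] at hz'
  exact hz' hzi


/-- In a `k`-connected graph of order `n` with `n - 1 > k ≥ 1`, every vertex `x`
satisfies `W(x,G) ≤ (1/2)·⌊(n+k-2)/k⌋·(2n+k-2-k·⌊(n+k-2)/k⌋)`. -/
theorem status_le_of_kConnected (n k : ℕ) (hk : 1 ≤ k) (hn : k < n - 1)
    (G : SimpleGraph (Fin n)) (hG : IsKConnected G k) (x : Fin n) :
    (status G x : ℚ) ≤ (1 / 2 : ℚ) * ((n + k - 2) / k : ℕ) *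
      (2 * (n : ℚ) + (k : ℚ) - 2 - (k : ℚ) * ((n + k - 2) / k : ℕ)) := by
  classical
  have hn3 : 3 ≤ n := by omega
  have hc : G.Connected := kconn_connected hG
  set e := ecc G x with he_def
  set ball : ℕ → Finset (Fin n) := fun i => Finset.univ.filter (fun y => G.dist x y ≤ i) with hball
  -- distance bounded by e
  have hdle : ∀ y, G.dist x y ≤ e := fun y => Finset.le_sup (Finset.mem_univ y)
  -- a vertex at distance e
  have : Nonempty (Fin n) := ⟨x⟩
  obtain ⟨y0, -, hy0'⟩ := Finset.exists_mem_eq_sup Finset.univ Finset.univ_nonempty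
    (fun y => G.dist x y)
  have hy0 : G.dist x y0 = e := by rw [he_def, ecc]; exact hy0'.symm
  -- e ≥ 1
  have he1 : 1 ≤ e := by
    obtain ⟨y, hy⟩ : ∃ y : Fin n, y ≠ x := by
      have : 1 < Fintype.card (Fin n) := by simp; omega
      obtain ⟨y, z, hyz⟩ := Fintype.exists_pair_of_one_lt_card this
      rcases eq_or_ne y x with rfl | h
      · exact ⟨z, fun h' => hyz h'.symm⟩
      · exact ⟨y, h⟩
    calc 1 ≤ G.dist x y := hc.pos_dist_of_ne (Ne.symm hy)
    _ ≤ e := hdle y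
  -- ball cardinality lower bound
  have hballcard : ∀ i, i < e → 1 + k * i ≤ (ball i).card := by
    intro i
    induction i with
    | zero =>
      intro _
      have : x ∈ ball 0 := by simp [hball, SimpleGraph.dist_self]
      simpa using Finset.card_pos.2 ⟨x, this⟩
    | succ i ih =>
      intro hie
      have hsub : ball i ∪ sphere G x (i+1) ⊆ ball (i+1) := by
        intro z hz
        simp only [hball, Finset.mem_union, Finset.mem_filter, Finset.mem_univ, true_and,
          sphere] at hz ⊢
        omega
      have hdisj : Disjoint (ball i) (sphere G x (i+1)) := by
        rw [Finset.disjoint_left]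
        intro z hz1 hz2
        simp only [hball, Finset.mem_filter, Finset.mem_univ, true_and, sphere] at hz1 hz2
        omega
      have hsph : k ≤ (sphere G x (i+1)).card :=
        sphere_card_ge hG x y0 (i+1) (by omega) (by omega)
      calc 1 + k * (i+1) = (1 + k * i) + k := by ring
      _ ≤ (ball i).card + (sphere G x (i+1)).card := by
          exact Nat.add_le_add (ih (by omega)) hsph
      _ = (ball i ∪ sphere G x (i+1)).card := (Finset.card_union_of_disjoint hdisj).symm
      _ ≤ (ball (i+1)).card := Finset.card_le_card hsub
  -- e ≤ t
  set t := (n + k - 2) / k with ht_def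
  have hket : k * (e - 1) + 2 ≤ n := by
    have h1 : 1 + k * (e - 1) ≤ (ball (e-1)).card := hballcard (e-1) (by omega)
    have h2 : (ball (e-1)).card ≤ n - 1 := by
      have : ball (e-1) ⊆ Finset.univ.erase y0 := by
        intro z hz
        simp only [hball, Finset.mem_filter, Finset.mem_univ, true_and] at hz
        refine Finset.mem_erase.2 ⟨?_, Finset.mem_univ z⟩
        rintro rfl; omega
      calc (ball (e-1)).card ≤ (Finset.univ.erase y0).card := Finset.card_le_card this
      _ = n - 1 := by rw [Finset.card_erase_of_mem (Finset.mem_univ y0)]; simp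
    omega
  have het : e ≤ t := by
    have h1 : (e - 1) * k ≤ n - 2 := by rw [mul_comm]; omega
    have h2 : e - 1 ≤ (n - 2) / k := (Nat.le_div_iff_mul_le (by omega)).2 h1
    have h3 : t = (n - 2) / k + 1 := by
      rw [ht_def, show n + k - 2 = (n - 2) + k by omega, Nat.add_div_right _ (by omega)]
    omega
  have hkt : k * t ≤ n + k - 2 := by
    have h3 : t = (n - 2) / k + 1 := by
      rw [ht_def, show n + k - 2 = (n - 2) + k by omega, Nat.add_div_right _ (by omega)]
    have := Nat.div_mul_le_self (n - 2) k
    calc k * t = (n-2)/k * k + k := by rw [h3]; ring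
    _ ≤ (n - 2) + k := by omega
    _ = n + k - 2 := by omega
  -- sum identity
  have hsumid : status G x + ∑ i ∈ Finset.range e, (ball i).card = e * n := by
    have key : ∀ y : Fin n, e - G.dist x y = ∑ i ∈ Finset.range e,
        (if G.dist x y ≤ i then 1 else 0) := by
      intro y
      rw [← Finset.card_filter]
      have : (Finset.range e).filter (fun i => G.dist x y ≤ i) = Finset.Ico (G.dist x y) e := by
        ext i
        simp [Finset.mem_filter, Finset.mem_Ico, and_comm]
      rw [this]
      simp [Nat.card_Ico]
    have h1 : ∑ y : Fin n, (e - G.dist x y) = ∑ i ∈ Finset.range e, (ball i).card := by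
      rw [Finset.sum_congr rfl (fun y _ => key y), Finset.sum_comm]
      refine Finset.sum_congr rfl (fun i _ => ?_)
      rw [hball]
      exact (Finset.card_filter _ _).symm
    rw [status, ← h1, ← Finset.sum_add_distrib]
    have : ∀ y : Fin n, G.dist x y + (e - G.dist x y) = e := fun y => by
      have := hdle y; omega
    rw [Finset.sum_congr rfl (fun y _ => this y)]
    simp [Finset.card_univ, mul_comm]
  -- lower bound on the sum of ball cards
  have hsumball : e + k * (∑ i ∈ Finset.range e, i) ≤ ∑ i ∈ Finset.range e, (ball i).card := by
    calc e + k * (∑ i ∈ Finset.range e, i) = ∑ i ∈ Finset.range e, (1 + k * i) := by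
          rw [Finset.sum_add_distrib, Finset.sum_const, Finset.mul_sum]; simp [Finset.card_range]
    _ ≤ _ := Finset.sum_le_sum (fun i hi => hballcard i (Finset.mem_range.1 hi))
  have hgauss : (∑ i ∈ Finset.range e, i) * 2 = e * (e - 1) := Finset.sum_range_id_mul_two e
  -- now pure arithmetic in ℚ
  have hmain : 2 * status G x + k * (e * (e-1)) + 2 * e ≤ 2 * (e * n) := by
    have := hsumid
    nlinarith [hsumball, hgauss]
  -- casts
  have heeQ : ((e - 1 : ℕ) : ℚ) = (e:ℚ) - 1 := by push_cast [Nat.cast_sub he1]; ring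
  have hQ : 2 * (status G x : ℚ) + k * (e * ((e:ℚ)-1)) + 2 * e ≤ 2 * (e * n) := by
    have h := (Nat.cast_le (α := ℚ)).2 hmain
    push_cast at h
    rw [heeQ] at h
    linarith
  have heQ : (1:ℚ) ≤ e := by exact_mod_cast he1
  have hetQ : (e:ℚ) ≤ t := by exact_mod_cast het
  have hktQ : (k:ℚ) * t ≤ (n:ℚ) + k - 2 := by
    have h := (Nat.cast_le (α := ℚ)).2 hkt
    have h2 : (2:ℕ) ≤ n + k := by omega
    push_cast [Nat.cast_sub h2] at h
    linarith
  have hkQ : (1:ℚ) ≤ k := by exact_mod_cast hk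
  have hS : (status G x : ℚ) ≤ (e:ℚ)*n - e - k*e*((e:ℚ)-1)/2 := by linarith
  rcases eq_or_lt_of_le hetQ with heq | hlt
  · rw [heq] at hS; linarith
  · have hetN : e < t := by exact_mod_cast hlt
    have hetQ' : (e:ℚ) + 1 ≤ t := by exact_mod_cast hetN
    have hke : (k:ℚ)*e ≤ k*t - k := by
      have := mul_le_mul_of_nonneg_left (show (e:ℚ) ≤ (t:ℚ)-1 by linarith)
        (show (0:ℚ) ≤ k by linarith)
      linarith
    have h2f : (0:ℚ) ≤ 2*(n:ℚ) - 2 - k*((t:ℚ)+e-1) := by nlinarith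
    have hprod : (0:ℚ) ≤ ((t:ℚ)-e) * (2*(n:ℚ) - 2 - k*((t:ℚ)+e-1)) :=
      mul_nonneg (by linarith) h2f
    linarith [hS, hprod]
end

section
/- Let n - 1 > k ≥ 2 with k even. Then the diameter of the Harary graph H_{k,n} equals ⌊(n+k-2)/k⌋. -/
open Finset SimpleGraph

lemma circDist_eq (n : ℕ) (i j : Fin n) :
    circDist n i j =
      min ((i.val - j.val) + (j.val - i.val)) (n - ((i.val - j.val) + (j.val - i.val))) := by
  have hi := i.isLt; have hj := j.isLt
  unfold circDist
  rcases lt_trichotomy i.val j.val with h | h | h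
  · have h1 : (i.val + n - j.val) % n = i.val + n - j.val := Nat.mod_eq_of_lt (by omega)
    have h2 : (j.val + n - i.val) % n = j.val - i.val := by
      have e : j.val + n - i.val = (j.val - i.val) + n := by omega
      rw [e, Nat.add_mod_right, Nat.mod_eq_of_lt (by omega)]
    omega
  · have e1 : i.val + n - j.val = n := by omega
    have e2 : j.val + n - i.val = n := by omega
    rw [e1, e2, Nat.mod_self]; omega
  · have h1 : (j.val + n - i.val) % n = j.val + n - i.val := Nat.mod_eq_of_lt (by omega)
    have h2 : (i.val + n - j.val) % n = i.val - j.val := by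
      have e : i.val + n - j.val = (i.val - j.val) + n := by omega
      rw [e, Nat.add_mod_right, Nat.mod_eq_of_lt (by omega)]
    omega

lemma circDist_triangle (n : ℕ) (a b c : Fin n) :
    circDist n a c ≤ circDist n a b + circDist n b c := by
  have := a.isLt; have := b.isLt; have := c.isLt
  rw [circDist_eq, circDist_eq, circDist_eq]; omega

lemma circDist_eq_zero {n : ℕ} {i j : Fin n} (h : circDist n i j = 0) : i = j := by
  have hi := i.isLt; have hj := j.isLt
  rw [circDist_eq] at h
  exact Fin.ext (by omega)

lemma circDist_le_half (n : ℕ) (i j : Fin n) : circDist n i j ≤ n / 2 := by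
  have := i.isLt; have := j.isLt
  rw [circDist_eq]; omega

lemma harary_step (k n : ℕ) (hm : 1 ≤ k / 2) (hn2 : 2 * (k / 2) + 2 ≤ n)
    (i j : Fin n) (hc : 0 < circDist n i j) :
    ∃ i' : Fin n, (hararyEven k n).Adj i i' ∧
      circDist n i' j = circDist n i j - min (circDist n i j) (k / 2) := by
  set m := k / 2 with hmdef
  have hi := i.isLt; have hj := j.isLt
  have hcd := circDist_eq n i j
  set c := circDist n i j with hcdef
  set t := min c m with htdef
  have ht1 : 1 ≤ t := by omega
  have htm : t ≤ m := by omega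
  have htc : t ≤ c := by omega
  -- helper to build the result
  have build : ∀ e : ℕ, ∀ he : e < n, e ≠ i.val →
      (min (i.val - e + (e - i.val)) (n - (i.val - e + (e - i.val))) ≤ m) →
      (min (e - j.val + (j.val - e)) (n - (e - j.val + (j.val - e))) = c - t) →
      ∃ i' : Fin n, (hararyEven k n).Adj i i' ∧ circDist n i' j = c - t := by
    intro e he hne hadj hdist
    refine ⟨⟨e, he⟩, ⟨?_, ?_⟩, ?_⟩
    · intro hh; exact hne (congrArg Fin.val hh).symm
    · rw [circDist_eq]; exact hadj
    · rw [circDist_eq]; exact hdist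
  rcases lt_trichotomy i.val j.val with h | h | h
  · by_cases hb : j.val - i.val ≤ n - (j.val - i.val)
    · -- c = j - i ; move forward: e = i + t
      have hcv : c = j.val - i.val := by omega
      exact build (i.val + t) (by omega) (by omega) (by omega) (by omega)
    · -- c = n - (j - i) ; move backward
      have hcv : c = n - (j.val - i.val) := by omega
      by_cases h2 : t ≤ i.val
      · exact build (i.val - t) (by omega) (by omega) (by omega) (by omega)
      · exact build (i.val + n - t) (by omega) (by omega) (by omega) (by omega)
  · omega
  · by_cases hb : i.val - j.val ≤ n - (i.val - j.val)
    · have hcv : c = i.val - j.val := by omega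
      exact build (i.val - t) (by omega) (by omega) (by omega) (by omega)
    · have hcv : c = n - (i.val - j.val) := by omega
      by_cases h2 : i.val + t < n
      · exact build (i.val + t) (by omega) (by omega) (by omega) (by omega)
      · exact build (i.val + t - n) (by omega) (by omega) (by omega) (by omega)

lemma harary_walk (k n : ℕ) (hm : 1 ≤ k / 2) (hn2 : 2 * (k / 2) + 2 ≤ n) :
    ∀ c : ℕ, ∀ i j : Fin n, circDist n i j ≤ (k / 2) * c →
      ∃ w : (hararyEven k n).Walk i j, w.length ≤ c := by
  intro c
  induction c with
  | zero =>
    intro i j h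
    simp only [Nat.mul_zero, Nat.le_zero] at h
    rcases circDist_eq_zero h
    exact ⟨SimpleGraph.Walk.nil, by simp⟩
  | succ c ih =>
    intro i j h
    by_cases h0 : circDist n i j = 0
    · rcases circDist_eq_zero h0
      exact ⟨SimpleGraph.Walk.nil, by simp⟩
    · obtain ⟨i', hadj, hci'⟩ := harary_step k n hm hn2 i j (by omega)
      have hle : circDist n i' j ≤ (k / 2) * c := by
        rw [hci']
        rcases le_or_gt (circDist n i j) (k / 2) with h1 | h1
        · omega
        · have e : min (circDist n i j) (k / 2) = k / 2 := by omega
          rw [e]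
          have hms : k / 2 * (c + 1) = k / 2 * c + k / 2 := by ring
          omega
      obtain ⟨w, hw⟩ := ih i' j hle
      exact ⟨SimpleGraph.Walk.cons hadj w, by rw [SimpleGraph.Walk.length_cons]; omega⟩

lemma harary_walk_lb (k n : ℕ) {i j : Fin n} (w : (hararyEven k n).Walk i j) :
    circDist n i j ≤ (k / 2) * w.length := by
  induction w with
  | nil =>
    simp only [SimpleGraph.Walk.length_nil, Nat.mul_zero, Nat.le_zero]
    rw [circDist_eq]; omega
  | @cons a b c hab p ih =>
    calc circDist n a c ≤ circDist n a b + circDist n b c := circDist_triangle n a b c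
      _ ≤ k / 2 + (k / 2) * p.length := Nat.add_le_add hab.2 ih
      _ = (k / 2) * (SimpleGraph.Walk.cons hab p).length := by
          rw [SimpleGraph.Walk.length_cons, Nat.mul_succ]; omega

lemma harary_dist (k n : ℕ) (hm : 1 ≤ k / 2) (hn2 : 2 * (k / 2) + 2 ≤ n) (i j : Fin n) :
    (hararyEven k n).dist i j = (circDist n i j + (k / 2) - 1) / (k / 2) := by
  set m := k / 2 with hmdef
  set c := circDist n i j with hcdef
  -- upper bound
  have hub : (hararyEven k n).dist i j ≤ (c + m - 1) / m := by
    have hcm : c ≤ m * ((c + m - 1) / m) := by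
      have h1 := Nat.div_add_mod (c + m - 1) m
      have h2 := Nat.mod_lt (c + m - 1) (show 0 < m by omega)
      set q := (c + m - 1) / m with hq
      set P := m * q with hP
      omega
    obtain ⟨w, hw⟩ := harary_walk k n hm hn2 ((c + m - 1) / m) i j hcm
    exact le_trans (SimpleGraph.dist_le w) hw
  -- lower bound
  have hr : (hararyEven k n).Reachable i j := by
    obtain ⟨w, _⟩ := harary_walk k n hm hn2 c i j (Nat.le_mul_of_pos_left c (by omega))
    exact ⟨w⟩
  obtain ⟨w, hwlen⟩ := hr.exists_walk_length_eq_dist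
  have hlb : c ≤ m * (hararyEven k n).dist i j := by
    rw [← hwlen]; exact harary_walk_lb k n w
  have hlb2 : (c + m - 1) / m ≤ (hararyEven k n).dist i j := by
    rw [Nat.div_le_iff_le_mul_add_pred (by omega : 0 < m)]
    set P := m * (hararyEven k n).dist i j with hP
    omega
  omega

/-- For `k` even, `n - 1 > k ≥ 2`, the Harary graph `H_{k,n}` has diameter
`⌊(n+k-2)/k⌋`. -/
theorem hararyEven_diam (k n : ℕ) (hk : 2 ≤ k) (hke : Even k) (hn : k < n - 1) :
    graphDiam (hararyEven k n) = (n + k - 2) / k := by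
  obtain ⟨m', rfl⟩ : ∃ m', k = 2 * m' := by obtain ⟨a, ha⟩ := hke; exact ⟨a, by omega⟩
  have hm : 1 ≤ 2 * m' / 2 := by omega
  have hn2 : 2 * (2 * m' / 2) + 2 ≤ n := by omega
  have hnn : 0 < n := by omega
  have j0lt : n / 2 < n := by omega
  have htarget : (n + 2 * m' - 2) / (2 * m') = (n / 2 + 2 * m' / 2 - 1) / (2 * m' / 2) := by
    rw [← Nat.div_div_eq_div_mul]
    have e1 : 2 * m' / 2 = m' := by omega
    rw [e1]
    congr 1
    omega
  rw [htarget]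
  unfold graphDiam
  apply le_antisymm
  · apply Finset.sup_le
    intro p _
    rw [harary_dist _ n hm hn2]
    exact Nat.div_le_div_right (by have := circDist_le_half n p.1 p.2; omega)
  · have hcv : circDist n (⟨0, hnn⟩ : Fin n) ⟨n / 2, j0lt⟩ = n / 2 := by
      rw [circDist_eq]; simp; omega
    calc (n / 2 + 2 * m' / 2 - 1) / (2 * m' / 2)
        = (hararyEven (2 * m') n).dist ⟨0, hnn⟩ ⟨n / 2, j0lt⟩ := by
          rw [harary_dist _ n hm hn2, hcv]
      _ ≤ _ := Finset.le_sup (f := fun p : Fin n × Fin n => (hararyEven (2 * m') n).dist p.1 p.2)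
          (Finset.mem_univ (⟨0, hnn⟩, ⟨n / 2, j0lt⟩))
end

section
/- Let n - 1 > k ≥ 3 with k odd and n even, and suppose k + 1 < n ≤ 3k - 1. Then the Harary graph H_{k,n} has diameter 2, every vertex has status 2n - k - 2, and W(H_{k,n}) = (1/2)·n·(2n-k-2). -/
open Finset SimpleGraph

lemma hOE_adj (k n : ℕ) (i j : Fin n) : (hararyOddEven k n).Adj i j ↔
    i ≠ j ∧ (circDist n i j ≤ (k - 1) / 2 ∨ circDist n i j = n / 2) := Iff.rfl
def shiftv (n : ℕ) (hn : 0 < n) (x : Fin n) (t : ℕ) : Fin n :=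
  ⟨(x.val + t) % n, Nat.mod_lt _ hn⟩

section helpers

lemma circDist_self' (n : ℕ) (i : Fin n) : circDist n i i = 0 := by
  unfold circDist
  have : i.val + n - i.val = n := by omega
  simp [this]

lemma shiftv_val_lt (n : ℕ) (hn : 0 < n) (x : Fin n) (t : ℕ) (h : x.val + t < n) :
    (shiftv n hn x t).val = x.val + t := by
  simp [shiftv, Nat.mod_eq_of_lt h]

lemma shiftv_val_ge (n : ℕ) (hn : 0 < n) (x : Fin n) (t : ℕ) (ht : t < n) (h : n ≤ x.val + t) :
    (shiftv n hn x t).val = x.val + t - n := by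
  have h2 : x.val + t < 2 * n := by have := x.isLt; omega
  simp only [shiftv]
  rw [Nat.mod_eq_sub_mod h, Nat.mod_eq_of_lt (by omega)]

lemma circDist_shiftv (n : ℕ) (hn : 0 < n) (x : Fin n) (t : ℕ) (ht : t < n) :
    circDist n x (shiftv n hn x t) = min t (n - t) := by
  rcases Nat.lt_or_ge (x.val + t) n with h | h
  · have hz := shiftv_val_lt n hn x t h
    unfold circDist
    rw [hz]
    have e1 : x.val + n - (x.val + t) = n - t := by omega
    have e2 : x.val + t + n - x.val = t + n := by omega
    rw [e1, e2, Nat.add_mod_right, Nat.mod_eq_of_lt ht]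
    rcases Nat.eq_zero_or_pos t with h0 | h0
    · subst h0; simp [Nat.mod_self]
    · rw [Nat.mod_eq_of_lt (by omega)]; exact Nat.min_comm _ _
  · have hz := shiftv_val_ge n hn x t ht h
    unfold circDist
    rw [hz]
    have e1 : x.val + n - (x.val + t - n) = 2 * n - t := by have := x.isLt; omega
    have e2 : x.val + t - n + n - x.val = t := by omega
    rw [e1, e2, Nat.mod_eq_of_lt ht]
    have h2n : 2 * n - t = (n - t) + n := by omega
    rw [h2n, Nat.add_mod_right, Nat.mod_eq_of_lt (by omega)]; exact Nat.min_comm _ _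

lemma shiftv_offset (n : ℕ) (hn : 0 < n) (x y : Fin n) :
    shiftv n hn x ((y.val + n - x.val) % n) = y := by
  apply Fin.ext
  have hx := x.isLt; have hy := y.isLt
  rcases le_or_gt x.val y.val with h | h
  · have e : (y.val + n - x.val) % n = y.val - x.val := by
      have h9 : y.val + n - x.val = (y.val - x.val) + n := by omega
      rw [h9, Nat.add_mod_right, Nat.mod_eq_of_lt (by omega)]
    rw [e, shiftv_val_lt n hn x _ (by omega)]
    omega
  · have e : (y.val + n - x.val) % n = y.val + n - x.val := Nat.mod_eq_of_lt (by omega)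
    rw [e, shiftv_val_ge n hn x _ (by omega) (by omega)]
    omega

lemma shiftv_mod_congr (n : ℕ) (hn : 0 < n) (x : Fin n) (t₁ t₂ : ℕ) (h : t₁ % n = t₂ % n) :
    shiftv n hn x t₁ = shiftv n hn x t₂ := by
  apply Fin.ext
  simp only [shiftv]
  conv_lhs => rw [Nat.add_mod, h, ← Nat.add_mod]

lemma shiftv_shiftv (n : ℕ) (hn : 0 < n) (x : Fin n) (s t : ℕ) :
    shiftv n hn (shiftv n hn x s) t = shiftv n hn x (s + t) := by
  apply Fin.ext
  simp only [shiftv]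
  rw [Nat.mod_add_mod, Nat.add_assoc]

lemma shiftv_inj (n : ℕ) (hn : 0 < n) (x : Fin n) (t₁ t₂ : ℕ) (h1 : t₁ < n) (h2 : t₂ < n)
    (h : shiftv n hn x t₁ = shiftv n hn x t₂) : t₁ = t₂ := by
  have hv : (x.val + t₁) % n = (x.val + t₂) % n := congrArg Fin.val h
  have hx := x.isLt
  rcases Nat.lt_or_ge (x.val + t₁) n with a1 | a1 <;> rcases Nat.lt_or_ge (x.val + t₂) n with a2 | a2
  · rw [Nat.mod_eq_of_lt a1, Nat.mod_eq_of_lt a2] at hv; omega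
  · rw [Nat.mod_eq_of_lt a1, Nat.mod_eq_sub_mod a2, Nat.mod_eq_of_lt (by omega)] at hv; omega
  · rw [Nat.mod_eq_sub_mod a1, Nat.mod_eq_of_lt (by omega), Nat.mod_eq_of_lt a2] at hv; omega
  · rw [Nat.mod_eq_sub_mod a1, Nat.mod_eq_of_lt (by omega), Nat.mod_eq_sub_mod a2,
      Nat.mod_eq_of_lt (by omega)] at hv; omega

lemma circDist_shiftv_shiftv (n : ℕ) (hn : 0 < n) (x : Fin n) (s t : ℕ) (hs : s < n) :
    circDist n (shiftv n hn x s) (shiftv n hn x t)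
      = min ((t + n - s) % n) (n - (t + n - s) % n) := by
  have key : shiftv n hn x t = shiftv n hn (shiftv n hn x s) ((t + n - s) % n) := by
    rw [shiftv_shiftv]
    apply shiftv_mod_congr
    rw [Nat.add_mod_mod]
    have h9 : s + (t + n - s) = t + n := by omega
    rw [h9, Nat.add_mod_right]
  rw [key, circDist_shiftv n hn _ _ (Nat.mod_lt _ hn)]

lemma shiftv_zero {n : ℕ} {hn : 0 < n} {x : Fin n} : shiftv n hn x 0 = x := by
  apply Fin.ext; simp [shiftv, Nat.mod_eq_of_lt x.isLt]

end helpers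

lemma common_nbr (k n : ℕ) (hk : 3 ≤ k) (hko : Odd k) (hne : Even n)
    (h1 : k + 1 < n) (h2 : n ≤ 3 * k - 1) (x y : Fin n) (hxy : x ≠ y)
    (hna : ¬ (hararyOddEven k n).Adj x y) :
    ∃ z, (hararyOddEven k n).Adj x z ∧ (hararyOddEven k n).Adj z y := by
  have hn0 : 0 < n := by omega
  have hk2 : k = 2 * ((k - 1) / 2) + 1 := by obtain ⟨c, hc⟩ := hko; omega
  have hn2 : n = 2 * (n / 2) := by obtain ⟨c, hc⟩ := hne; omega
  set a := (y.val + n - x.val) % n with hadef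
  have han : a < n := Nat.mod_lt _ hn0
  have hy : shiftv n hn0 x a = y := shiftv_offset n hn0 x y
  have ha0 : a ≠ 0 := by
    intro h
    exact hxy (by rw [← hy, h, shiftv_zero])
  have hcd : circDist n x y = min a (n - a) := by
    rw [← hy]; exact circDist_shiftv n hn0 x a han
  have hna' : ¬ (circDist n x y ≤ (k - 1) / 2 ∨ circDist n x y = n / 2) :=
    fun h => hna ((hOE_adj k n x y).2 ⟨hxy, h⟩)
  rw [hcd] at hna'
  push_neg at hna'
  obtain ⟨hd1, hd2⟩ := hna'
  have hbval : ∀ t : ℕ, 0 < t → t < n →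
      (a + n - t) % n = if t ≤ a then a - t else a + n - t := by
    intro t ht0 htn
    split
    · next h =>
        have h9 : a + n - t = (a - t) + n := by omega
        rw [h9, Nat.add_mod_right, Nat.mod_eq_of_lt (by omega)]
    · next h => exact Nat.mod_eq_of_lt (by omega)
  have build : ∀ t : ℕ, 0 < t → t < n →
      (min t (n - t) ≤ (k - 1) / 2 ∨ min t (n - t) = n / 2) →
      0 < (a + n - t) % n →
      (min ((a + n - t) % n) (n - (a + n - t) % n) ≤ (k - 1) / 2 ∨
        min ((a + n - t) % n) (n - (a + n - t) % n) = n / 2) →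
      ∃ z, (hararyOddEven k n).Adj x z ∧ (hararyOddEven k n).Adj z y := by
    intro t ht0 htn h3 hb0 h4
    refine ⟨shiftv n hn0 x t, (hOE_adj k n _ _).2 ⟨?_, ?_⟩, (hOE_adj k n _ _).2 ⟨?_, ?_⟩⟩
    · intro h
      have := shiftv_inj n hn0 x 0 t hn0 htn (by rw [shiftv_zero]; exact h)
      omega
    · rw [circDist_shiftv n hn0 x t htn]; exact h3
    · intro h
      rw [← hy] at h
      have := shiftv_inj n hn0 x t a htn han h
      subst this
      have : a + n - a = n := by omega
      rw [this, Nat.mod_self] at hb0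
      omega
    · rw [← hy, circDist_shiftv_shiftv n hn0 x t a htn]; exact h4
  rcases le_or_gt a (n / 2) with ham | ham
  · rcases le_or_gt a (2 * ((k - 1) / 2)) with h2r | h2r
    · refine build ((k - 1) / 2) (by omega) (by omega) (by left; omega) ?_ ?_ <;>
        rw [hbval _ (by omega) (by omega)] <;>
        · split <;> omega
    · refine build (n / 2) (by omega) (by omega) (by right; omega) ?_ ?_ <;>
        rw [hbval _ (by omega) (by omega)] <;>
        · split <;> omega
  · rcases le_or_gt (n - a) (2 * ((k - 1) / 2)) with h2r | h2r
    · refine build (n - (k - 1) / 2) (by omega) (by omega) (by left; omega) ?_ ?_ <;>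
        rw [hbval _ (by omega) (by omega)] <;>
        · split <;> omega
    · refine build (n / 2) (by omega) (by omega) (by right; omega) ?_ ?_ <;>
        rw [hbval _ (by omega) (by omega)] <;>
        · split <;> omega
lemma degree_eq (k n : ℕ) (hk : 3 ≤ k) (hko : Odd k) (hne : Even n)
    (h1 : k + 1 < n) (h2 : n ≤ 3 * k - 1) (x : Fin n)
    [DecidablePred ((hararyOddEven k n).Adj x)] :
    (Finset.univ.filter ((hararyOddEven k n).Adj x)).card = k := by
  have hn0 : 0 < n := by omega
  have hk2 : k = 2 * ((k - 1) / 2) + 1 := by obtain ⟨c, hc⟩ := hko; omega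
  have hn2 : n = 2 * (n / 2) := by obtain ⟨c, hc⟩ := hne; omega
  set r := (k - 1) / 2 with hrdef
  have hT : Finset.univ.filter ((hararyOddEven k n).Adj x)
      = Finset.image (fun t => shiftv n hn0 x t)
        ((Finset.Icc 1 r ∪ Finset.Icc (n - r) (n - 1)) ∪ {n / 2}) := by
    ext y
    simp only [Finset.mem_filter, Finset.mem_univ, true_and, Finset.mem_image,
      Finset.mem_union, Finset.mem_Icc, Finset.mem_singleton]
    rw [hOE_adj]
    constructor
    · rintro ⟨hne', hcond⟩
      refine ⟨(y.val + n - x.val) % n, ?_, shiftv_offset n hn0 x y⟩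
      set a := (y.val + n - x.val) % n with hadef
      have han : a < n := Nat.mod_lt _ hn0
      have ha0 : a ≠ 0 := by
        intro h
        exact hne' (by rw [← shiftv_offset n hn0 x y, ← hadef, h, shiftv_zero])
      have hcd : circDist n x y = min a (n - a) := by
        rw [← shiftv_offset n hn0 x y, ← hadef]
        exact circDist_shiftv n hn0 x a han
      rw [hcd] at hcond
      omega
    · rintro ⟨t, ht, rfl⟩
      have htn : t < n := by omega
      have ht0 : 0 < t := by omega
      constructor
      · intro h
        have := shiftv_inj n hn0 x 0 t hn0 htn (by rw [shiftv_zero]; exact h)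
        omega
      · rw [circDist_shiftv n hn0 x t htn]
        omega
  rw [hT, Finset.card_image_of_injOn, Finset.card_union_of_disjoint,
    Finset.card_union_of_disjoint, Nat.card_Icc, Nat.card_Icc, Finset.card_singleton]
  · omega
  · simp only [Finset.disjoint_left, Finset.mem_Icc]
    intro t ht1 ht2
    omega
  · simp only [Finset.disjoint_left, Finset.mem_union, Finset.mem_Icc, Finset.mem_singleton]
    intro t ht1 ht2
    omega
  · intro t1 ht1 t2 ht2 h
    simp only [Finset.coe_union, Finset.coe_Icc, Finset.coe_singleton, Set.mem_union,
      Set.mem_Icc, Set.mem_singleton_iff] at ht1 ht2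
    exact shiftv_inj n hn0 x t1 t2 (by omega) (by omega) h

/-- For `k` odd, `n` even, `n - 1 > k ≥ 3`, `k + 1 < n ≤ 3k - 1`: `H_{k,n}` has
diameter `2`, every vertex has status `2n - k - 2`, and
`W(H_{k,n}) = (1/2)·n·(2n-k-2)`. -/
theorem hararyOddEven_small (k n : ℕ) (hk : 3 ≤ k) (hko : Odd k) (hne : Even n)
    (h1 : k + 1 < n) (h2 : n ≤ 3 * k - 1) :
    graphDiam (hararyOddEven k n) = 2 ∧
    (∀ x : Fin n, status (hararyOddEven k n) x = 2 * n - k - 2) ∧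
    wiener (hararyOddEven k n) = (1 / 2 : ℚ) * (n : ℚ) * (2 * (n : ℚ) - k - 2) := by
  classical
  set G := hararyOddEven k n with hG
  have hn0 : 0 < n := by omega
  have hdist : ∀ x y : Fin n, G.dist x y = if x = y then 0 else if G.Adj x y then 1 else 2 := by
    intro x y
    split_ifs with he ha
    · subst he; exact SimpleGraph.dist_self
    · exact SimpleGraph.dist_eq_one_iff_adj.2 ha
    · obtain ⟨z, hxz, hzy⟩ := common_nbr k n hk hko hne h1 h2 x y he ha
      have hwle : G.dist x y ≤ 2 := by
        have h := SimpleGraph.dist_le (hxz.toWalk.append hzy.toWalk)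
        simpa using h
      have hreach : G.Reachable x y := ⟨hxz.toWalk.append hzy.toWalk⟩
      have h0 : G.dist x y ≠ 0 := by
        intro h
        rw [hreach.dist_eq_zero_iff] at h
        exact he h
      have h1' : G.dist x y ≠ 1 := fun h => ha (SimpleGraph.dist_eq_one_iff_adj.1 h)
      omega
  have hstat : ∀ x : Fin n, status G x = 2 * n - k - 2 := by
    intro x
    have hdeg := degree_eq k n hk hko hne h1 h2 x
    unfold status
    have hsum : ∑ y : Fin n, G.dist x y
        = ∑ y : Fin n, ((if ¬ x = y then 1 else 0) + (if ¬ x = y ∧ ¬ G.Adj x y then 1 else 0)) := by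
      refine Finset.sum_congr rfl fun y _ => ?_
      rw [hdist x y]
      split_ifs <;> simp_all
    rw [hsum, Finset.sum_add_distrib, Finset.sum_boole, Finset.sum_boole]
    have e1 : Finset.univ.filter (fun y : Fin n => ¬ x = y) = Finset.univ.erase x := by
      ext y
      simp [eq_comm]
    have e2 : Finset.univ.filter (fun y : Fin n => ¬ x = y ∧ ¬ G.Adj x y)
        = Finset.univ \ ({x} ∪ Finset.univ.filter (G.Adj x)) := by
      ext y
      simp only [Finset.mem_filter, Finset.mem_univ, true_and, Finset.mem_sdiff,
        Finset.mem_union, Finset.mem_singleton]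
      constructor
      · rintro ⟨hy1, hy2⟩ (rfl | h)
        · exact hy1 rfl
        · exact hy2 h
      · intro hy
        exact ⟨fun h => hy (Or.inl h.symm), fun h => hy (Or.inr h)⟩
    rw [e1, e2, Finset.card_sdiff_of_subset (by intro y _; exact Finset.mem_univ y),
      Finset.card_union_of_disjoint, Finset.card_erase_of_mem (Finset.mem_univ x),
      Finset.card_singleton, hdeg, Finset.card_univ, Fintype.card_fin]
    · simp only [Nat.cast_id]
      omega
    · simp only [Finset.disjoint_left, Finset.mem_singleton, Finset.mem_filter]
      rintro y rfl ⟨-, h⟩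
      exact G.irrefl h
  have hcast : ((2 * n - k - 2 : ℕ) : ℚ) = 2 * (n : ℚ) - (k : ℚ) - 2 := by
    rw [Nat.cast_sub (by omega), Nat.cast_sub (by omega)]
    push_cast
    ring
  refine ⟨?_, hstat, ?_⟩
  · apply le_antisymm
    · apply Finset.sup_le
      intro p _
      rw [hdist p.1 p.2]
      split_ifs <;> omega
    · have hy0 : (k - 1) / 2 + 1 < n := by omega
      set x0 : Fin n := ⟨0, hn0⟩ with hx0
      set y0 : Fin n := ⟨(k - 1) / 2 + 1, hy0⟩ with hy0'
      have hxyne : x0 ≠ y0 := by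
        intro h
        have := congrArg Fin.val h
        simp [hx0, hy0'] at this
      have hsh : y0 = shiftv n hn0 x0 ((k - 1) / 2 + 1) := by
        apply Fin.ext
        simp [hx0, hy0', shiftv, Nat.mod_eq_of_lt hy0]
      have hcdxy : circDist n x0 y0 = (k - 1) / 2 + 1 := by
        rw [hsh, circDist_shiftv n hn0 x0 _ hy0]
        have hk2 : k = 2 * ((k - 1) / 2) + 1 := by obtain ⟨c, hc⟩ := hko; omega
        omega
      have hnadj : ¬ G.Adj x0 y0 := by
        intro hadj
        obtain ⟨-, h⟩ := (hOE_adj k n x0 y0).1 hadj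
        rw [hcdxy] at h
        have hk2 : k = 2 * ((k - 1) / 2) + 1 := by obtain ⟨c, hc⟩ := hko; omega
        have hn2 : n = 2 * (n / 2) := by obtain ⟨c, hc⟩ := hne; omega
        omega
      have hd2 : G.dist x0 y0 = 2 := by
        rw [hdist x0 y0, if_neg hxyne, if_neg hnadj]
      calc (2 : ℕ) = G.dist x0 y0 := hd2.symm
        _ ≤ _ := Finset.le_sup (f := fun p : Fin n × Fin n => G.dist p.1 p.2)
            (Finset.mem_univ (x0, y0))
  · unfold wiener
    have hWsum : ∑ p ∈ Finset.univ.offDiag, ((G.dist p.1 p.2 : ℚ))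
        = ∑ p ∈ (Finset.univ ×ˢ Finset.univ : Finset (Fin n × Fin n)), ((G.dist p.1 p.2 : ℚ)) := by
      apply Finset.sum_subset
      · intro p _
        exact Finset.mem_product.2 ⟨Finset.mem_univ _, Finset.mem_univ _⟩
      · intro p _ hnp
        have hp : p.1 = p.2 := by
          by_contra hne'
          exact hnp (Finset.mem_offDiag.2 ⟨Finset.mem_univ _, Finset.mem_univ _, hne'⟩)
        rw [hp, SimpleGraph.dist_self]
        simp
    rw [hWsum, Finset.sum_product]
    have : ∀ x : Fin n, ∑ y : Fin n, ((G.dist x y : ℚ)) = ((2 * n - k - 2 : ℕ) : ℚ) := by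
      intro x
      rw [← Nat.cast_sum]
      rw [show ∑ y : Fin n, G.dist x y = status G x from rfl, hstat x]
    rw [Finset.sum_congr rfl (fun x _ => this x), Finset.sum_const, Finset.card_univ,
      Fintype.card_fin, hcast, nsmul_eq_mul]
    ring
end
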